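/- Let μ be a complex number with |μ| = 1, μ ∉ {1,-1}, and nonnegative imaginary part, and let n ≥ 1. Then the block-diagonal matrix A = J(μ,n) ⊕ J(μ,n) ∈ GL(2n,ℍ), with μ viewed as a quaternion, is strongly reversible in GL(2n,ℍ); that is, there exists an invertible 2n×2n quaternionic matrix g with g² = I and g·A·g⁻¹ = A⁻¹. -/

import Mathlib

open Matrix

set_option maxHeartbeats 1000000

/-- The Jordan block `J(λ, m)`: an `m × m` matrix with `λ` on the diagonal,
`1` on the superdiagonal, and `0` elsewhere. -/
def jordanBlock {D : Type*} [Ring D] (lam : D) (m : ℕ) : Matrix (Fin m) (Fin m) D :=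
  Matrix.of fun i j => if i = j then lam else if (i : ℕ) + 1 = (j : ℕ) then 1 else 0

/-- The realification embedding `Ψ : M(n,ℂ) → M(2n,ℝ)`, replacing each complex entry
`z` by the 2×2 real block `((Re z, Im z), (-Im z, Re z))`. -/
def Psi {n : ℕ} (A : Matrix (Fin n) (Fin n) ℂ) :
    Matrix (Fin n × Fin 2) (Fin n × Fin 2) ℝ :=
  Matrix.of fun p q =>
    !![(A p.1 q.1).re, (A p.1 q.1).im; -(A p.1 q.1).im, (A p.1 q.1).re] p.2 q.2

/-- The standard embedding of `ℂ` into the real quaternions,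
sending `a + b i` to `a + b 𝐢`. -/
def toQuat (z : ℂ) : Quaternion ℝ := ⟨z.re, z.im, 0, 0⟩

/-- `X ∈ gl(n,D)` is `Ad_{GL(n,D)}`-real: there is an invertible matrix `g`
with `g X g⁻¹ = -X`. -/
def AdjReal {D : Type*} [Ring D] {ι : Type*} [Fintype ι] [DecidableEq ι]
    (X : Matrix ι ι D) : Prop :=
  ∃ g : (Matrix ι ι D)ˣ, g.val * X * (g⁻¹).val = -X

/-- `X ∈ gl(n,D)` is strongly `Ad_{GL(n,D)}`-real: there is an invertible matrix `g`
with `g² = I` and `g X g⁻¹ = -X`. -/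
def StronglyAdjReal {D : Type*} [Ring D] {ι : Type*} [Fintype ι] [DecidableEq ι]
    (X : Matrix ι ι D) : Prop :=
  ∃ g : (Matrix ι ι D)ˣ, g * g = 1 ∧ g.val * X * (g⁻¹).val = -X

/-- `A` is reversible in `GL(n,D)`: `A` is invertible and there is an invertible
matrix `g` with `g A g⁻¹ = A⁻¹`. -/
def Reversible {D : Type*} [Ring D] {ι : Type*} [Fintype ι] [DecidableEq ι]
    (A : Matrix ι ι D) : Prop :=
  ∃ a : (Matrix ι ι D)ˣ, a.val = A ∧ ∃ g : (Matrix ι ι D)ˣ, g * a * g⁻¹ = a⁻¹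

/-- `A` is strongly reversible in `GL(n,D)`: `A` is invertible and there is an
invertible matrix `g` with `g² = I` and `g A g⁻¹ = A⁻¹`. -/
def StronglyReversible {D : Type*} [Ring D] {ι : Type*} [Fintype ι] [DecidableEq ι]
    (A : Matrix ι ι D) : Prop :=
  ∃ a : (Matrix ι ι D)ˣ, a.val = A ∧ ∃ g : (Matrix ι ι D)ˣ, g * g = 1 ∧ g * a * g⁻¹ = a⁻¹

set_option linter.unreachableTactic false
set_option linter.unusedTactic false

namespace Stmt7

variable {n : ℕ}

lemma jb_apply {D : Type*} [Ring D] (lam : D) (m : ℕ) (i j : Fin m) :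
    jordanBlock lam m i j = if i = j then lam else if (i : ℕ) + 1 = (j : ℕ) then 1 else 0 := rfl

lemma sum_ite_val {α : Type*} [AddCommMonoid α] (m : ℕ) (g : Fin n → α) :
    (∑ k : Fin n, if m = (k : ℕ) then g k else 0) = if h : m < n then g ⟨m, h⟩ else 0 := by
  split_ifs with h
  · rw [Finset.sum_eq_single (⟨m, h⟩ : Fin n)]
    · simp
    · intro k _ hk
      rw [if_neg]
      intro he
      exact hk (by simp [Fin.ext_iff, ← he])
    · simp
  · apply Finset.sum_eq_zero
    intro k _
    rw [if_neg]
    intro he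
    exact h (he ▸ k.isLt)

lemma npow_apply (p : ℕ) (i j : Fin n) :
    ((jordanBlock (0 : ℂ) n) ^ p) i j = if (i : ℕ) + p = (j : ℕ) then 1 else 0 := by
  induction p generalizing j with
  | zero => simp [Matrix.one_apply, Fin.ext_iff]
  | succ p ih =>
      rw [pow_succ, Matrix.mul_apply]
      have hpt : ∀ k : Fin n, ((jordanBlock (0:ℂ) n) ^ p) i k * jordanBlock (0:ℂ) n k j
          = if (i : ℕ) + p = (k : ℕ) then (if (k:ℕ) + 1 = (j:ℕ) then 1 else 0) else 0 := by
        intro k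
        rw [ih, jb_apply]
        by_cases h1 : k = j <;> by_cases h2 : (i:ℕ) + p = (k:ℕ) <;>
          simp [h1, h2, Fin.ext_iff] <;> split_ifs <;> simp_all <;> omega
      rw [Finset.sum_congr rfl fun k _ => hpt k, sum_ite_val]
      by_cases h : (i : ℕ) + p < n
      · rw [dif_pos h]
        simp only [Fin.val_mk]
        rw [show (i:ℕ) + p + 1 = (i:ℕ) + (p+1) by omega]
      · rw [dif_neg h, if_neg (by omega)]

lemma npow_n_zero : (jordanBlock (0 : ℂ) n) ^ n = 0 := by
  ext i j
  rw [npow_apply, if_neg (by omega)]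
  rfl

lemma jb_decomp (μ : ℂ) : jordanBlock μ n = μ • (1 : Matrix (Fin n) (Fin n) ℂ) + jordanBlock 0 n := by
  ext i j
  simp only [jb_apply, Matrix.add_apply, Matrix.smul_apply, Matrix.one_apply, smul_eq_mul]
  split_ifs <;> simp_all


noncomputable def Kmat (μ : ℂ) (n : ℕ) : Matrix (Fin n) (Fin n) ℂ :=
  Matrix.of fun i j =>
    if (i : ℕ) ≤ (j : ℕ) then (-1) ^ ((j : ℕ) - i) * μ⁻¹ ^ ((j : ℕ) - i + 1) else 0

lemma Kmat_apply (μ : ℂ) (i j : Fin n) :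
    Kmat μ n i j =
      if (i : ℕ) ≤ (j : ℕ) then (-1) ^ ((j : ℕ) - i) * μ⁻¹ ^ ((j : ℕ) - i + 1) else 0 := rfl

lemma JK_eq_one (μ : ℂ) (hμ : μ ≠ 0) : jordanBlock μ n * Kmat μ n = 1 := by
  ext i j
  rw [Matrix.mul_apply]
  have hpt : ∀ k : Fin n, jordanBlock μ n i k * Kmat μ n k j
      = (if (i : ℕ) = (k : ℕ) then μ * Kmat μ n k j else 0)
        + (if (i : ℕ) + 1 = (k : ℕ) then Kmat μ n k j else 0) := by
    intro k
    rw [jb_apply]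
    by_cases h1 : i = k
    · rw [if_pos h1, if_pos (by rw [h1]), if_neg (by omega)]
      ring
    · have h1' : ¬ (i : ℕ) = (k : ℕ) := by simpa [Fin.ext_iff] using h1
      rw [if_neg h1]
      rw [if_neg h1']
      split_ifs <;> ring
  rw [Finset.sum_congr rfl fun k _ => hpt k, Finset.sum_add_distrib,
    sum_ite_val, sum_ite_val, dif_pos i.isLt]
  simp only [Fin.eta, Matrix.one_apply, Fin.ext_iff, Fin.val_mk]
  rcases lt_trichotomy (i : ℕ) (j : ℕ) with hij | hij | hij
  · -- i < j
    obtain ⟨d, hd⟩ : ∃ d, (j : ℕ) - i = d + 1 := ⟨(j:ℕ) - i - 1, by omega⟩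
    rw [dif_pos (by omega : (i:ℕ) + 1 < n)]
    rw [if_neg (by omega)]
    rw [Kmat_apply, Kmat_apply, if_pos (by omega), if_pos (by simp only [Fin.val_mk]; omega : ((⟨(i:ℕ)+1, by omega⟩ : Fin n) : ℕ) ≤ (j:ℕ))]
    simp only [Fin.val_mk]
    rw [hd, show (j : ℕ) - ((i:ℕ)+1) = d by omega]
    rw [pow_succ, pow_succ]
    field_simp
    ring
  · rw [if_pos hij, Kmat_apply, if_pos (by omega), show (j:ℕ) - (i:ℕ) = 0 by omega]
    have h2 : ∀ h : (i:ℕ)+1 < n, Kmat μ n ⟨(i:ℕ)+1, h⟩ j = 0 := by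
      intro h
      rw [Kmat_apply, if_neg (by simp; omega)]
    split_ifs with h
    · rw [h2 h]
      simp [hμ]
    · simp [hμ]
  · rw [if_neg (by omega), Kmat_apply, if_neg (by omega), mul_zero]
    have h2 : ∀ h : (i:ℕ)+1 < n, Kmat μ n ⟨(i:ℕ)+1, h⟩ j = 0 := by
      intro h
      rw [Kmat_apply, if_neg (by simp; omega)]
    split_ifs with h
    · rw [h2 h, add_zero]
    · rw [add_zero]

lemma KJ_eq_one (μ : ℂ) (hμ : μ ≠ 0) : Kmat μ n * jordanBlock μ n = 1 :=
  mul_eq_one_comm.mp (JK_eq_one μ hμ)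


def UT (A : Matrix (Fin n) (Fin n) ℂ) : Prop := ∀ i j : Fin n, (j : ℕ) < (i : ℕ) → A i j = 0

lemma UT_mul {A B : Matrix (Fin n) (Fin n) ℂ} (hA : UT A) (hB : UT B) : UT (A * B) := by
  intro i j hij
  rw [Matrix.mul_apply]
  apply Finset.sum_eq_zero
  intro k _
  rcases lt_or_ge (k : ℕ) (i : ℕ) with h | h
  · rw [hA i k h, zero_mul]
  · rw [hB k j (by omega), mul_zero]

lemma UT_mul_diag {A B : Matrix (Fin n) (Fin n) ℂ} (hA : UT A) (hB : UT B) (i : Fin n) :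
    (A * B) i i = A i i * B i i := by
  rw [Matrix.mul_apply, Finset.sum_eq_single i]
  · intro k _ hk
    rcases lt_or_ge (k : ℕ) (i : ℕ) with h | h
    · rw [hA i k h, zero_mul]
    · rw [hB k i (by simp [Fin.ext_iff] at hk; omega), mul_zero]
  · simp

lemma UT_K (μ : ℂ) : UT (Kmat μ n) := by
  intro i j hij
  rw [Kmat_apply, if_neg (by omega)]

lemma K_diag (μ : ℂ) (i : Fin n) : Kmat μ n i i = μ⁻¹ := by
  rw [Kmat_apply, if_pos le_rfl]
  simp

lemma UT_Kpow (μ : ℂ) (p : ℕ) :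
    UT ((Kmat μ n) ^ p) ∧ ∀ i : Fin n, ((Kmat μ n) ^ p) i i = μ⁻¹ ^ p := by
  induction p with
  | zero =>
      constructor
      · intro i j hij
        rw [pow_zero, Matrix.one_apply_ne (by simp [Fin.ext_iff]; omega)]
      · intro i; simp
  | succ p ih =>
      constructor
      · rw [pow_succ]; exact UT_mul ih.1 (UT_K μ)
      · intro i
        rw [pow_succ, UT_mul_diag ih.1 (UT_K μ), ih.2, K_diag, pow_succ]

lemma NJ_comm (μ : ℂ) :
    jordanBlock (0 : ℂ) n * jordanBlock μ n = jordanBlock μ n * jordanBlock 0 n := by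
  rw [jb_decomp μ, mul_add, add_mul, Matrix.mul_smul, Matrix.smul_mul, mul_one, one_mul]

lemma NK_comm (μ : ℂ) (hμ : μ ≠ 0) :
    jordanBlock (0 : ℂ) n * Kmat μ n = Kmat μ n * jordanBlock 0 n := by
  calc jordanBlock (0 : ℂ) n * Kmat μ n
      = (Kmat μ n * jordanBlock μ n) * (jordanBlock 0 n * Kmat μ n) := by
        rw [KJ_eq_one μ hμ, one_mul]
    _ = Kmat μ n * (jordanBlock μ n * jordanBlock 0 n) * Kmat μ n := by
        simp only [mul_assoc]
    _ = Kmat μ n * (jordanBlock 0 n * jordanBlock μ n) * Kmat μ n := by rw [NJ_comm]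
    _ = (Kmat μ n * jordanBlock 0 n) * (jordanBlock μ n * Kmat μ n) := by
        simp only [mul_assoc]
    _ = Kmat μ n * jordanBlock 0 n := by rw [JK_eq_one μ hμ, mul_one]

noncomputable def Mmat (μ : ℂ) (n : ℕ) : Matrix (Fin n) (Fin n) ℂ :=
  (-μ⁻¹) • (jordanBlock 0 n * Kmat μ n)

lemma K_eq (μ : ℂ) (hμ : μ ≠ 0) :
    Kmat μ n = μ⁻¹ • (1 : Matrix (Fin n) (Fin n) ℂ) + Mmat μ n := by
  have h1 : Kmat μ n * jordanBlock 0 n = 1 - μ • Kmat μ n := by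
    have h := KJ_eq_one (n := n) μ hμ
    rw [jb_decomp μ, mul_add, Matrix.mul_smul, mul_one] at h
    exact eq_sub_of_add_eq' h
  rw [Mmat, NK_comm μ hμ, h1]
  match_scalars <;> field_simp <;> simp

lemma Mpow (μ : ℂ) (hμ : μ ≠ 0) (p : ℕ) :
    Mmat μ n ^ p = ((-μ⁻¹) ^ p) • ((jordanBlock 0 n) ^ p * (Kmat μ n) ^ p) := by
  have hc : Commute (Kmat μ n) (jordanBlock (0 : ℂ) n) := (NK_comm μ hμ).symm
  induction p with
  | zero => simp
  | succ p ih =>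
      rw [pow_succ, ih, Mmat, Matrix.smul_mul, Matrix.mul_smul, smul_smul, ← pow_succ]
      congr 1
      calc jordanBlock (0:ℂ) n ^ p * Kmat μ n ^ p * (jordanBlock 0 n * Kmat μ n)
          = jordanBlock (0:ℂ) n ^ p * (Kmat μ n ^ p * jordanBlock 0 n) * Kmat μ n := by
            simp only [mul_assoc]
        _ = jordanBlock (0:ℂ) n ^ p * (jordanBlock 0 n * Kmat μ n ^ p) * Kmat μ n := by
            rw [(hc.pow_left p).eq]
        _ = (jordanBlock (0:ℂ) n ^ p * jordanBlock 0 n) * (Kmat μ n ^ p * Kmat μ n) := by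
            simp only [mul_assoc]
        _ = jordanBlock (0:ℂ) n ^ (p+1) * Kmat μ n ^ (p+1) := by rw [pow_succ, pow_succ]

lemma Mn_zero (μ : ℂ) (hμ : μ ≠ 0) : Mmat μ n ^ n = 0 := by
  rw [Mpow μ hμ, npow_n_zero, zero_mul, smul_zero]

noncomputable def Qmat (μ : ℂ) (n : ℕ) : Matrix (Fin n) (Fin n) ℂ :=
  Matrix.of fun i j =>
    (Mmat μ n ^ (n - 1 - (j : ℕ))) i ⟨n - 1, by have := i.isLt; omega⟩

lemma Q_apply (μ : ℂ) (i j : Fin n) :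
    Qmat μ n i j = (Mmat μ n ^ (n - 1 - (j : ℕ))) i ⟨n - 1, by have := i.isLt; omega⟩ := rfl

lemma MQ_eq_QN (μ : ℂ) (hμ : μ ≠ 0) :
    Mmat μ n * Qmat μ n = Qmat μ n * jordanBlock 0 n := by
  ext i j
  have hn : 0 < n := i.pos
  have lhs : (Mmat μ n * Qmat μ n) i j = (Mmat μ n ^ (n - 1 - (j:ℕ) + 1)) i ⟨n-1, by omega⟩ := by
    rw [Matrix.mul_apply, pow_succ', Matrix.mul_apply]
    rfl
  rw [lhs, Matrix.mul_apply]
  by_cases hj : (j : ℕ) = 0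
  · rw [show n - 1 - (j:ℕ) + 1 = n by omega, Mn_zero μ hμ]
    rw [Finset.sum_eq_zero, Matrix.zero_apply]
    intro k _
    rw [jb_apply]
    split_ifs with hc1 hc2
    · rw [mul_zero]
    · omega
    · rw [mul_zero]
  · rw [Finset.sum_eq_single ⟨(j:ℕ) - 1, by omega⟩]
    · rw [jb_apply, if_neg (by simp only [Fin.ext_iff, Fin.val_mk]; omega),
        if_pos (by simp only [Fin.val_mk]; omega), mul_one, Q_apply]
      simp only [Fin.val_mk]
      rw [show n - 1 - ((j:ℕ) - 1) = n - 1 - (j:ℕ) + 1 by have := j.isLt; omega]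
    · intro k _ hk
      rw [jb_apply]
      split_ifs with hc1 hc2
      · rw [mul_zero]
      · exact absurd (by simp only [Fin.ext_iff, Fin.val_mk]; omega) hk
      · rw [mul_zero]
    · simp

lemma KQ_eq_QJbar (μ : ℂ) (hμ : μ ≠ 0) :
    Kmat μ n * Qmat μ n = Qmat μ n * jordanBlock μ⁻¹ n := by
  rw [K_eq μ hμ, jb_decomp μ⁻¹, add_mul, mul_add, Matrix.smul_mul, Matrix.mul_smul,
    one_mul, mul_one, MQ_eq_QN μ hμ]

lemma NpowX_apply (p : ℕ) (X : Matrix (Fin n) (Fin n) ℂ) (i j : Fin n) :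
    ((jordanBlock (0:ℂ) n) ^ p * X) i j
      = if h : (i : ℕ) + p < n then X ⟨(i:ℕ) + p, h⟩ j else 0 := by
  rw [Matrix.mul_apply]
  have hpt : ∀ k : Fin n, ((jordanBlock (0:ℂ) n) ^ p) i k * X k j
      = if (i:ℕ) + p = (k:ℕ) then X k j else 0 := by
    intro k
    rw [npow_apply]
    split_ifs <;> simp
  rw [Finset.sum_congr rfl fun k _ => hpt k, sum_ite_val]

lemma Q_entry (μ : ℂ) (hμ : μ ≠ 0) (i j : Fin n) :
    Qmat μ n i j = if h : (i:ℕ) + (n - 1 - (j:ℕ)) < n then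
      ((-μ⁻¹) ^ (n - 1 - (j:ℕ))) *
        ((Kmat μ n ^ (n - 1 - (j:ℕ))) ⟨(i:ℕ) + (n - 1 - (j:ℕ)), h⟩ ⟨n-1, by have := i.isLt; omega⟩)
      else 0 := by
  rw [Q_apply, Mpow μ hμ, Matrix.smul_apply, NpowX_apply, smul_eq_mul]
  split_ifs <;> simp

lemma UT_Q (μ : ℂ) (hμ : μ ≠ 0) : UT (Qmat μ n) := by
  intro i j hij
  rw [Q_entry μ hμ, dif_neg (by have := j.isLt; omega)]

lemma Q_diag (μ : ℂ) (hμ : μ ≠ 0) (i : Fin n) :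
    Qmat μ n i i = ((-μ⁻¹) * μ⁻¹) ^ (n - 1 - (i:ℕ)) := by
  have h : (i:ℕ) + (n - 1 - (i:ℕ)) < n := by have := i.isLt; omega
  rw [Q_entry μ hμ, dif_pos h,
    show (⟨(i:ℕ) + (n - 1 - (i:ℕ)), h⟩ : Fin n) = ⟨n-1, by have := i.isLt; omega⟩ by
      simp [Fin.ext_iff]; have := i.isLt; omega,
    (UT_Kpow μ (n - 1 - (i:ℕ))).2, mul_pow]

lemma Q_det_isUnit (μ : ℂ) (hμ : μ ≠ 0) : IsUnit (Qmat μ n).det := by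
  rw [Matrix.det_of_upperTriangular (by intro i j hij; exact UT_Q μ hμ i j hij)]
  rw [isUnit_iff_ne_zero]
  apply Finset.prod_ne_zero_iff.mpr
  intro i _
  rw [Q_diag μ hμ]
  apply pow_ne_zero
  simp [hμ]

lemma JQ_eq_QKbar (μ : ℂ) (hμ : μ ≠ 0) :
    jordanBlock μ n * Qmat μ n = Qmat μ n * Kmat μ⁻¹ n := by
  have e1 : jordanBlock μ n * (Qmat μ n * jordanBlock μ⁻¹ n) = Qmat μ n := by
    rw [← KQ_eq_QJbar μ hμ, ← mul_assoc, JK_eq_one μ hμ, one_mul]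
  have : Qmat μ n * Kmat μ⁻¹ n = jordanBlock μ n * Qmat μ n := by
    conv_lhs => rw [← e1]
    rw [mul_assoc, mul_assoc, JK_eq_one μ⁻¹ (inv_ne_zero hμ), mul_one]
  exact this.symm


noncomputable def toQuatHom : ℂ →+* Quaternion ℝ where
  toFun := toQuat
  map_one' := by ext <;> simp [toQuat, Quaternion.re_one, Quaternion.imI_one, Quaternion.imJ_one, Quaternion.imK_one]
  map_mul' z w := by
    ext <;> simp only [Quaternion.re_mul, Quaternion.imI_mul, Quaternion.imJ_mul, Quaternion.imK_mul] <;>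
      simp [toQuat, Quaternion.re_mul, Quaternion.imI_mul, Quaternion.imJ_mul,
        Quaternion.imK_mul, Complex.mul_re, Complex.mul_im]
  map_zero' := by ext <;> simp [toQuat, Quaternion.re_zero, Quaternion.imI_zero, Quaternion.imJ_zero, Quaternion.imK_zero]
  map_add' z w := by ext <;> simp only [Quaternion.re_add, Quaternion.imI_add, Quaternion.imJ_add, Quaternion.imK_add] <;> simp [toQuat]

def jq : Quaternion ℝ := ⟨0, 0, 1, 0⟩

lemma jq_mul_toQuat (z : ℂ) : jq * toQuat z = toQuat ((starRingEnd ℂ) z) * jq := by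
  ext <;> simp only [Quaternion.re_mul, Quaternion.imI_mul, Quaternion.imJ_mul, Quaternion.imK_mul] <;>
    simp [jq, toQuat, Quaternion.re_mul, Quaternion.imI_mul, Quaternion.imJ_mul,
      Quaternion.imK_mul]

lemma jq_jq : jq * jq = -1 := by
  ext <;> simp only [Quaternion.re_mul, Quaternion.imI_mul, Quaternion.imJ_mul, Quaternion.imK_mul, Quaternion.re_neg, Quaternion.imI_neg, Quaternion.imJ_neg, Quaternion.imK_neg, Quaternion.re_one, Quaternion.imI_one, Quaternion.imJ_one, Quaternion.imK_one] <;>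
    simp [jq, Quaternion.re_mul, Quaternion.imI_mul, Quaternion.imJ_mul, Quaternion.imK_mul]

noncomputable def Smat (n : ℕ) : Matrix (Fin n) (Fin n) (Quaternion ℝ) :=
  Matrix.diagonal fun _ => jq

lemma S_mul_map (A : Matrix (Fin n) (Fin n) ℂ) :
    Smat n * A.map ⇑toQuatHom = (A.map (starRingEnd ℂ)).map ⇑toQuatHom * Smat n := by
  apply Matrix.ext
  intro i j
  rw [Smat, Matrix.diagonal_mul, Matrix.mul_diagonal, Matrix.map_apply, Matrix.map_apply,
    Matrix.map_apply]
  exact jq_mul_toQuat _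

lemma S_mul_S : Smat n * Smat n = -1 := by
  rw [Smat, Matrix.diagonal_mul_diagonal]
  rw [show (fun _ : Fin n => jq * jq) = fun _ => (-1 : Quaternion ℝ) from funext fun _ => jq_jq]
  apply Matrix.ext
  intro i j
  by_cases h : i = j
  · subst h; simp
  · rw [Matrix.diagonal_apply_ne _ h, Matrix.neg_apply, Matrix.one_apply_ne h, neg_zero]

lemma jb_map {α : Type*} [Ring α] (μ : ℂ) (f : ℂ →+* α) :
    (jordanBlock μ n).map ⇑f = jordanBlock (f μ) n := by
  ext i j
  simp only [Matrix.map_apply, jb_apply]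
  split_ifs <;> simp

lemma map_conj_conj (A : Matrix (Fin n) (Fin n) ℂ) :
    (A.map (starRingEnd ℂ)).map (starRingEnd ℂ) = A := by
  ext i j
  simp [Matrix.map_apply]

lemma map_conj_K (μ : ℂ) (hconj : (starRingEnd ℂ) μ = μ⁻¹) :
    (Kmat μ n).map (starRingEnd ℂ) = Kmat μ⁻¹ n := by
  ext i j
  simp only [Matrix.map_apply, Kmat_apply]
  split_ifs
  · rw [_root_.map_mul, map_pow, map_pow, map_inv₀, hconj, inv_inv, map_neg, _root_.map_one]
  · rw [map_zero]

end Stmt7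

open Stmt7

/-- For a complex number `μ` with `|μ| = 1`, `μ ∉ {1,-1}`, and nonnegative
imaginary part, and `n ≥ 1`, the block-diagonal quaternionic matrix `A = J(μ,n) ⊕ J(μ,n)`
(with `μ` viewed as a quaternion) is strongly reversible in `GL(2n,ℍ)`. -/
theorem stmt7 (μ : ℂ) (h1 : ‖μ‖ = 1) (h2 : μ ≠ 1) (h3 : μ ≠ -1) (h4 : 0 ≤ μ.im)
    (n : ℕ) (hn : 1 ≤ n) :
    StronglyReversible
      (fromBlocks (jordanBlock (toQuat μ) n) 0 0 (jordanBlock (toQuat μ) n)) := by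
  classical
  have hμ : μ ≠ 0 := by
    intro h
    rw [h] at h1
    simp at h1
  have hconj : (starRingEnd ℂ) μ = μ⁻¹ := by
    have hns : (starRingEnd ℂ) μ * μ = 1 := by
      rw [mul_comm, Complex.mul_conj, Complex.normSq_eq_norm_sq, h1]
      norm_num
    exact eq_inv_of_mul_eq_one_left hns
  -- complex-level data
  set J : Matrix (Fin n) (Fin n) ℂ := jordanBlock μ n with hJdef
  set K : Matrix (Fin n) (Fin n) ℂ := Kmat μ n with hKdef
  set Q : Matrix (Fin n) (Fin n) ℂ := Qmat μ n with hQdef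
  have hdet : IsUnit Q.det := Q_det_isUnit μ hμ
  set Qi : Matrix (Fin n) (Fin n) ℂ := Q⁻¹ with hQidef
  have hQQi : Q * Qi = 1 := Matrix.mul_nonsing_inv Q hdet
  have hQiQ : Qi * Q = 1 := Matrix.nonsing_inv_mul Q hdet
  have hJK : J * K = 1 := JK_eq_one μ hμ
  have hKJ : K * J = 1 := KJ_eq_one μ hμ
  have hQJbarQi : Q * jordanBlock μ⁻¹ n * Qi = K := by
    rw [← KQ_eq_QJbar μ hμ, mul_assoc, hQQi, mul_one]
  have hQiJQ : Qi * (J * Q) = Kmat μ⁻¹ n := by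
    rw [JQ_eq_QKbar μ hμ, ← mul_assoc, hQiQ, one_mul]
  -- quaternion-level matrices
  set S : Matrix (Fin n) (Fin n) (Quaternion ℝ) := Smat n with hSdef
  have hSS : S * S = -1 := S_mul_S
  set Jq : Matrix (Fin n) (Fin n) (Quaternion ℝ) := J.map ⇑toQuatHom with hJqdef
  set Kq : Matrix (Fin n) (Fin n) (Quaternion ℝ) := K.map ⇑toQuatHom with hKqdef
  have hJqjb : Jq = jordanBlock (toQuat μ) n := jb_map μ toQuatHom
  have hJKq : Jq * Kq = 1 := by
    rw [hJqdef, hKqdef, ← Matrix.map_mul, hJK, Matrix.map_one _ (map_zero _) (_root_.map_one _)]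
  have hKJq : Kq * Jq = 1 := by
    rw [hJqdef, hKqdef, ← Matrix.map_mul, hKJ, Matrix.map_one _ (map_zero _) (_root_.map_one _)]
  set h : Matrix (Fin n) (Fin n) (Quaternion ℝ) := Q.map ⇑toQuatHom * S with hhdef
  set hi : Matrix (Fin n) (Fin n) (Quaternion ℝ) := (-S) * Qi.map ⇑toQuatHom with hhidef
  have hSnS : S * (-S) = 1 := by rw [mul_neg, hSS, neg_neg]
  have hnSS : (-S) * S = 1 := by rw [neg_mul, hSS, neg_neg]
  have hhhi : h * hi = 1 := by
    rw [hhdef, hhidef, mul_assoc, ← mul_assoc S, hSnS, one_mul, ← Matrix.map_mul, hQQi,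
      Matrix.map_one _ (map_zero _) (_root_.map_one _)]
  have hhih : hi * h = 1 := by
    rw [hhdef, hhidef, mul_assoc, ← mul_assoc (Qi.map ⇑toQuatHom), ← Matrix.map_mul, hQiQ,
      Matrix.map_one _ (map_zero _) (_root_.map_one _), one_mul, hnSS]
  -- the conjugation identities
  have hSJ : S * Jq = (jordanBlock μ⁻¹ n).map ⇑toQuatHom * S := by
    rw [hSdef, hJqdef, S_mul_map, hJdef, jb_map μ (starRingEnd ℂ), hconj]
  have key1 : h * Jq * hi = Kq := by
    rw [hhdef, hhidef]
    calc Q.map ⇑toQuatHom * S * Jq * (-S * Qi.map ⇑toQuatHom)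
        = Q.map ⇑toQuatHom * (S * Jq) * (-S) * Qi.map ⇑toQuatHom := by
          simp only [mul_assoc]
      _ = Q.map ⇑toQuatHom * ((jordanBlock μ⁻¹ n).map ⇑toQuatHom * S) * (-S) *
            Qi.map ⇑toQuatHom := by rw [hSJ]
      _ = Q.map ⇑toQuatHom * (jordanBlock μ⁻¹ n).map ⇑toQuatHom * (S * (-S)) *
            Qi.map ⇑toQuatHom := by simp only [mul_assoc]
      _ = Q.map ⇑toQuatHom * (jordanBlock μ⁻¹ n).map ⇑toQuatHom * Qi.map ⇑toQuatHom := by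
            rw [hSnS, mul_one]
      _ = (Q * jordanBlock μ⁻¹ n * Qi).map ⇑toQuatHom := by
            rw [Matrix.map_mul, Matrix.map_mul]
      _ = Kq := by rw [hQJbarQi]
  have hSKbar : S * (Kmat μ⁻¹ n).map ⇑toQuatHom = Kq * S := by
    have e1 : (Kmat μ⁻¹ n).map (starRingEnd ℂ) = K := by
      rw [← map_conj_K μ hconj, map_conj_conj]
    rw [S_mul_map, e1]
  have key2 : hi * Jq * h = Kq := by
    rw [hhdef, hhidef]
    calc (-S) * Qi.map ⇑toQuatHom * Jq * (Q.map ⇑toQuatHom * S)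
        = (-S) * (Qi.map ⇑toQuatHom * (Jq * Q.map ⇑toQuatHom)) * S := by
          simp only [mul_assoc]
      _ = (-S) * (Qi * (J * Q)).map ⇑toQuatHom * S := by
          rw [hJqdef, ← Matrix.map_mul, ← Matrix.map_mul]
      _ = (-S) * (Kmat μ⁻¹ n).map ⇑toQuatHom * S := by rw [hQiJQ]
      _ = -(S * (Kmat μ⁻¹ n).map ⇑toQuatHom) * S := by rw [neg_mul]
      _ = -(Kq * S) * S := by rw [hSKbar]
      _ = -(Kq * (S * S)) := by rw [neg_mul, mul_assoc]
      _ = Kq := by rw [hSS, mul_neg_one, neg_neg]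
  -- block-level assembly
  set Amat := fromBlocks Jq 0 0 Jq with hAdef
  set Bmat := fromBlocks Kq 0 0 Kq with hBdef
  have hAB : Amat * Bmat = 1 := by
    rw [hAdef, hBdef, Matrix.fromBlocks_multiply]
    simp only [Matrix.mul_zero, Matrix.zero_mul, add_zero, zero_add, hJKq]
    exact Matrix.fromBlocks_one
  have hBA : Bmat * Amat = 1 := by
    rw [hAdef, hBdef, Matrix.fromBlocks_multiply]
    simp only [Matrix.mul_zero, Matrix.zero_mul, add_zero, zero_add, hKJq]
    exact Matrix.fromBlocks_one
  set gmat := fromBlocks 0 h hi 0 with hgdef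
  have hgg : gmat * gmat = 1 := by
    rw [hgdef, Matrix.fromBlocks_multiply]
    simp only [Matrix.mul_zero, Matrix.zero_mul, add_zero, zero_add, hhhi, hhih]
    exact Matrix.fromBlocks_one
  have hgag : gmat * Amat * gmat = Bmat := by
    have e : gmat * Amat = fromBlocks 0 (h * Jq) (hi * Jq) 0 := by
      rw [hgdef, hAdef, Matrix.fromBlocks_multiply]
      simp only [Matrix.mul_zero, Matrix.zero_mul, add_zero, zero_add]
    rw [e, hgdef, hBdef, Matrix.fromBlocks_multiply]
    simp only [Matrix.mul_zero, Matrix.zero_mul, add_zero, zero_add]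
    rw [key1, key2]
  refine ⟨⟨Amat, Bmat, hAB, hBA⟩, ?_, ⟨gmat, gmat, hgg, hgg⟩, ?_, ?_⟩
  · show Amat = _
    rw [hAdef, hJqjb]
  · exact Units.ext hgg
  · apply Units.ext
    exact hgag
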